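/- arXiv:1903.09236 — 4 statements merged into one kernel-verified Lean document; each statement's English description precedes it below -/
import Mathlib

section
/- Every k_ω topological group that is precompact is compact. -/
open Pointwise

/-- A Hausdorff `k_ω` topological group that is precompact is compact. -/
theorem stmt1 {G : Type*} [Group G] [TopologicalSpace G] [IsTopologicalGroup G] [T2Space G]
    (K : ℕ → Set G) (hKcpt : ∀ n, IsCompact (K n))
    (hdet : ∀ U : Set G, IsOpen U ↔ ∀ n, ∃ V : Set G, IsOpen V ∧ U ∩ K n = V ∩ K n)
    (hpre : ∀ U : Set G, IsOpen U → U.Nonempty →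
      ∃ F : Set G, F.Finite ∧ U * F = Set.univ) :
    CompactSpace G := by
  by_contra hnc
  rw [← isCompact_univ_iff] at hnc
  -- Any set meeting each `K n` in a finite set is closed.
  have hclosed : ∀ S : Set G, (∀ n, (S ∩ K n).Finite) → IsClosed S := by
    intro S hS
    rw [← isOpen_compl_iff, hdet]
    intro n
    refine ⟨(S ∩ K n)ᶜ, ((hS n).isClosed).isOpen_compl, ?_⟩
    ext g
    simp only [Set.mem_inter_iff, Set.mem_compl_iff, Set.mem_inter_iff, not_and]
    tauto
  set Q : ℕ → Set G := fun k => (K k ∪ (K k)⁻¹) ∪ {1} with hQdef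
  have hQcpt : ∀ k, IsCompact (Q k) :=
    fun k => (((hKcpt k).union (hKcpt k).inv).union isCompact_singleton)
  have hQone : ∀ k, (1:G) ∈ Q k := fun k => Or.inr rfl
  have hQK : ∀ k, K k ⊆ Q k := fun k => fun g hg => Or.inl (Or.inl hg)
  have hQKinv : ∀ k, (K k)⁻¹ ⊆ Q k := fun k => fun g hg => Or.inl (Or.inr hg)
  -- one step of the construction
  have step : ∀ (l : List G) (n : ℕ), ∃ g : G, ∀ m ∈ l, ∀ k < n, g * m⁻¹ ∉ Q k := by
    intro l n
    have hA : IsCompact (⋃ k ∈ Finset.range n, ⋃ m ∈ l, (fun a => a * m) '' Q k) := by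
      apply (Finset.range n).finite_toSet.isCompact_biUnion
      intro k _
      apply l.finite_toSet.isCompact_biUnion
      intro m _
      exact (hQcpt k).image (continuous_mul_right m)
    have hne : (⋃ k ∈ Finset.range n, ⋃ m ∈ l, (fun a => a * m) '' Q k) ≠ Set.univ := by
      intro h
      exact hnc (h ▸ hA)
    obtain ⟨g, hg⟩ := Set.ne_univ_iff_exists_notMem _ |>.mp hne
    refine ⟨g, fun m hm k hk hgm => hg ?_⟩
    refine Set.mem_biUnion (Finset.mem_coe.mpr (Finset.mem_range.mpr hk)) ?_
    refine Set.mem_biUnion hm ?_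
    exact ⟨g * m⁻¹, hgm, by group⟩
  choose stepf hstep using step
  -- the sequence
  let s : ℕ → List G := fun n => Nat.rec [] (fun n l => stepf l n :: l) n
  let x : ℕ → G := fun n => stepf (s n) n
  have hs_succ : ∀ n, s (n+1) = x n :: s n := fun n => rfl
  have hs_mem : ∀ m n, m < n → x m ∈ s n := by
    intro m n h
    induction n with
    | zero => omega
    | succ n ih =>
      rw [hs_succ n]
      rcases Nat.lt_succ_iff_lt_or_eq.mp h with h' | h'
      · exact List.mem_cons_of_mem _ (ih h')
      · subst h'; exact List.mem_cons_self
  have hx : ∀ m n k, m < n → k < n → x n * (x m)⁻¹ ∉ Q k := by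
    intro m n k hm hk
    exact hstep (s n) n (x m) (hs_mem m n hm) k hk
  -- the difference set
  set D : Set G := {g | ∃ m n : ℕ, m < n ∧ (g = x n * (x m)⁻¹ ∨ g = x m * (x n)⁻¹)} with hDdef
  have hxD : ∀ m n : ℕ, m ≠ n → x n * (x m)⁻¹ ∈ D := by
    intro m n hmn
    rcases lt_or_gt_of_ne hmn with h | h
    · exact ⟨m, n, h, Or.inl rfl⟩
    · exact ⟨n, m, h, Or.inr rfl⟩
  have hDfin : ∀ j, (D ∩ K j).Finite := by
    intro j
    apply Set.Finite.subset
      (Set.finite_range fun p : Fin (j+1) × Fin (j+1) => x p.1 * (x p.2)⁻¹)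
    rintro g ⟨⟨m, n, hmn, hg | hg⟩, hgK⟩
    · have hn : n ≤ j := by
        by_contra hn
        exact hx m n j hmn (by omega) (hg ▸ hQK j hgK)
      exact ⟨(⟨n, by omega⟩, ⟨m, by omega⟩), hg.symm⟩
    · have hn : n ≤ j := by
        by_contra hn
        apply hx m n j hmn (by omega)
        apply hQKinv j
        have : x n * (x m)⁻¹ = g⁻¹ := by rw [hg]; group
        rw [this]
        simpa using hgK
      exact ⟨(⟨m, by omega⟩, ⟨n, by omega⟩), hg.symm⟩
  have hDclosed : IsClosed D := hclosed D hDfin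
  have h1D : (1:G) ∉ D := by
    rintro ⟨m, n, hmn, hg | hg⟩
    · exact hx m n 0 hmn (by omega) (hg ▸ hQone 0)
    · apply hx m n 0 hmn (by omega)
      have h' : x m = x n := mul_inv_eq_one.mp hg.symm
      have : x n * (x m)⁻¹ = (1:G) := by rw [h']; group
      exact this ▸ hQone 0
  -- find a small symmetric neighborhood of 1
  have hU1 : Dᶜ ∈ nhds (1:G) := hDclosed.isOpen_compl.mem_nhds h1D
  obtain ⟨V, hVopen, hV1, hVV⟩ := exists_open_nhds_one_mul_subset hU1
  set W := V ∩ V⁻¹ with hWdef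
  have hWopen : IsOpen W := hVopen.inter hVopen.inv
  have hW1 : (1:G) ∈ W := ⟨hV1, by simpa using hV1⟩
  obtain ⟨F, hFfin, hFcov⟩ := hpre W hWopen ⟨1, hW1⟩
  have hx_mem : ∀ n : ℕ, ∃ v ∈ W, ∃ f ∈ F, v * f = x n := by
    intro n
    have hxn : x n ∈ W * F := by rw [hFcov]; exact Set.mem_univ _
    exact Set.mem_mul.mp hxn
  choose v hv f hf hvf using hx_mem
  obtain ⟨m, -, n, -, hmn, hfeq⟩ :=
    Set.infinite_univ.exists_ne_map_eq_of_mapsTo (fun n _ => hf n) hFfin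
  have heq : x n * (x m)⁻¹ = v n * (v m)⁻¹ := by
    rw [← hvf n, ← hvf m, ← hfeq]
    group
  have hmem : x n * (x m)⁻¹ ∈ Dᶜ := by
    rw [heq]
    apply hVV
    exact ⟨v n, (hv n).1, (v m)⁻¹, (hv m).2, rfl⟩
  exact hmem (hxD m n hmn)
end

section
/- An infinite countable Hausdorff topological group whose topology is determined by a countable family of compact subsets (k_ω) is not precompact. -/
open Pointwise

/-- A countably infinite Hausdorff `k_ω` topological group is not precompact. -/
theorem stmt2 {G : Type*} [Group G] [TopologicalSpace G] [IsTopologicalGroup G] [T2Space G]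
    [Countable G] [Infinite G]
    (K : ℕ → Set G) (hKcpt : ∀ n, IsCompact (K n)) (hKcov : (⋃ n, K n) = Set.univ)
    (hdet : ∀ U : Set G, IsOpen U ↔ ∀ n, ∃ V : Set G, IsOpen V ∧ U ∩ K n = V ∩ K n) :
    ¬ (∀ U : Set G, IsOpen U → U.Nonempty →
      ∃ F : Set G, F.Finite ∧ U * F = Set.univ) := by
  intro h
  -- no singleton is open
  have hsing : ∀ g : G, ¬ IsOpen ({g} : Set G) := by
    intro g hg
    have h1 : IsOpen ({1} : Set G) := by
      have := hg.smul (g⁻¹ : G)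
      simpa using this
    obtain ⟨F, hF, hUF⟩ := h {1} h1 ⟨1, rfl⟩
    rw [Set.singleton_mul] at hUF
    simp only [one_mul, Set.image_id'] at hUF
    exact Set.infinite_univ (hUF ▸ hF)
  by_cases hcpt : IsCompact (Set.univ : Set G)
  · haveI : CompactSpace G := ⟨hcpt⟩
    obtain ⟨g, hg⟩ := nonempty_interior_of_iUnion_of_closed
      (f := fun g : G => ({g} : Set G)) (fun g => isClosed_singleton)
      (Set.iUnion_of_singleton G)
    obtain ⟨x, hx⟩ := hg
    have hxg : x ∈ ({g} : Set G) := interior_subset hx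
    rw [Set.mem_singleton_iff] at hxg
    subst hxg
    have : interior ({x} : Set G) = {x} :=
      Set.Subset.antisymm interior_subset (by intro y hy; rw [hy]; exact hx)
    exact hsing x (this ▸ isOpen_interior)
  · obtain ⟨f, hf⟩ := exists_surjective_nat (Finset G)
    have hC : ∀ m : ℕ, ∃ g : G, g ∉ (⋃ i ∈ Finset.range (m+1), K i) * (f m : Set G) := by
      intro m
      by_contra hcon
      push_neg at hcon
      have hcompact : IsCompact ((⋃ i ∈ Finset.range (m+1), K i) * (f m : Set G)) :=
        (Finset.range (m+1)).isCompact_biUnion (fun i _ => hKcpt i) |>.mul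
          ((f m).finite_toSet.isCompact)
      exact hcpt (by
        have : (⋃ i ∈ Finset.range (m+1), K i) * (f m : Set G) = Set.univ :=
          Set.eq_univ_of_forall hcon
        rwa [this] at hcompact)
    choose g hg using hC
    set D : Set G := ⋃ m, g m • ((f m : Set G))⁻¹ with hD
    have hDfin : ∀ n, (D ∩ K n).Finite := by
      intro n
      apply Set.Finite.subset (s := ⋃ m ∈ Finset.range n, g m • ((f m : Set G))⁻¹)
      · exact (Finset.range n).finite_toSet.biUnion
          (fun m _ => ((f m).finite_toSet.inv).smul_set)
      · rintro x ⟨hxD, hxK⟩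
        obtain ⟨m, hm⟩ := Set.mem_iUnion.1 hxD
        refine Set.mem_biUnion (show m ∈ Finset.range n from ?_) hm
        rw [Finset.mem_range]
        by_contra hmn
        push_neg at hmn
        obtain ⟨y, hy, hyx⟩ := hm
        rw [Set.mem_inv] at hy
        apply hg m
        have hxin : x ∈ ⋃ i ∈ Finset.range (m+1), K i :=
          Set.mem_biUnion (Finset.mem_coe.2 (Finset.mem_range.2 (Nat.lt_succ_of_le hmn))) hxK
        have : x * y⁻¹ ∈ (⋃ i ∈ Finset.range (m+1), K i) * (f m : Set G) :=
          Set.mul_mem_mul hxin hy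
        have hgm : g m = x * y⁻¹ := by
          have : g m * y = x := hyx
          group
          rw [← this]
          group
        rwa [hgm]
    have hUopen : IsOpen Dᶜ := by
      rw [hdet]
      intro n
      refine ⟨(D ∩ K n)ᶜ, ((hDfin n).isClosed).isOpen_compl, ?_⟩
      ext x
      simp only [Set.mem_inter_iff, Set.mem_compl_iff, Set.mem_inter_iff]
      tauto
    rcases Set.eq_empty_or_nonempty Dᶜ with hDe | hDn
    · have hDuniv : D = Set.univ := by
        rw [← Set.compl_empty_iff]; exact hDe
      have hKfin : ∀ n, (K n).Finite := by
        intro n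
        have := hDfin n
        rwa [hDuniv, Set.univ_inter] at this
      have : IsOpen ({1} : Set G) := by
        rw [hdet]
        intro n
        refine ⟨(K n \ {1})ᶜ, ((hKfin n).subset Set.diff_subset).isClosed.isOpen_compl, ?_⟩
        ext x
        simp only [Set.mem_inter_iff, Set.mem_compl_iff, Set.mem_diff, Set.mem_singleton_iff]
        tauto
      exact hsing 1 this
    · obtain ⟨F, hFfin, hUF⟩ := h Dᶜ hUopen hDn
      obtain ⟨m, hm⟩ := hf hFfin.toFinset
      have hgm : g m ∈ Dᶜ * F := hUF ▸ Set.mem_univ _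
      obtain ⟨u, hu, x, hx, hux⟩ := hgm
      apply hu
      refine Set.mem_iUnion.2 ⟨m, ?_⟩
      have hxm : x ∈ (f m : Set G) := by
        rw [hm]
        simpa [hFfin.coe_toFinset] using hx
      refine ⟨x⁻¹, Set.inv_mem_inv.2 hxm, ?_⟩
      have : u * x = g m := hux
      show g m • x⁻¹ = u
      rw [smul_eq_mul, ← this]
      group
end

section
/- Every Fréchet–Urysohn topological group is an α₄ space: for every countable family (Sₙ) of sequences converging to a point x, there is a sequence S converging to x with S ∩ Sₙ ≠ ∅ for infinitely many n. -/
open Filter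

section aux

variable {G : Type*} [Group G] [TopologicalSpace G] [IsTopologicalGroup G]

lemma nyk_mem_K_of_forall {c : G} (h : ∀ U ∈ nhds (1 : G), c ∈ U) :
    c ∈ closure ({1} : Set G) := by
  rw [mem_closure_iff]
  intro W hW hcW
  have hU : (fun x => c * x⁻¹) '' W ∈ nhds (1 : G) := by
    have hopen : IsOpen ((fun x => c * x⁻¹) '' W) := by
      have : (fun x : G => c * x⁻¹) '' W = (fun x => c * x) '' (W⁻¹) := by
        ext y; constructor
        · rintro ⟨w, hw, rfl⟩; exact ⟨w⁻¹, by simpa using hw, rfl⟩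
        · rintro ⟨w, hw, rfl⟩; exact ⟨w⁻¹, by simpa using hw, by simp⟩
      rw [this]
      exact (isOpenMap_mul_left c) _ hW.inv
    exact hopen.mem_nhds ⟨c, hcW, by simp⟩
  obtain ⟨w, hw, hcw⟩ := h _ hU
  have h' : c * w⁻¹ = c := hcw
  have hw1 : w = 1 := by
    have : w⁻¹ = 1 := mul_left_cancel (show c * w⁻¹ = c * 1 by rw [mul_one]; exact h')
    simpa using this
  exact ⟨1, by rw [← hw1]; exact hw, rfl⟩

lemma nyk_mem_nhds_of_mem_K {c : G} (h : c ∈ closure ({1} : Set G)) :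
    ∀ U ∈ nhds (1 : G), c ∈ U := by
  intro U hU
  obtain ⟨V, hVU, hVopen, hV1⟩ := mem_nhds_iff.mp hU
  have hW : IsOpen ((fun x => c * x⁻¹) '' V) := by
    have : (fun x : G => c * x⁻¹) '' V = (fun x => c * x) '' (V⁻¹) := by
      ext y; constructor
      · rintro ⟨w, hw, rfl⟩; exact ⟨w⁻¹, by simpa using hw, rfl⟩
      · rintro ⟨w, hw, rfl⟩; exact ⟨w⁻¹, by simpa using hw, by simp⟩
    rw [this]
    exact (isOpenMap_mul_left c) _ hVopen.inv
  have hcmem : c ∈ (fun x => c * x⁻¹) '' V := ⟨1, hV1, by simp⟩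
  obtain ⟨x, hx1, hx⟩ := (mem_closure_iff.mp h) _ hW hcmem
  obtain ⟨v, hv, hveq⟩ := hx1
  have hx1' : x = (1 : G) := hx
  rw [hx1'] at hveq
  have hcv : c * v⁻¹ = 1 := hveq
  have hcv' : c = v := by rwa [mul_inv_eq_one] at hcv
  exact hVU (hcv' ▸ hv)

lemma nyk_two_limits {v : ℕ → G} {a : G} (h1 : Tendsto v atTop (nhds a))
    (h2 : Tendsto v atTop (nhds (1 : G))) : a ∈ closure ({1} : Set G) := by
  apply nyk_mem_K_of_forall
  intro U hU
  obtain ⟨V, hV, hVsplit⟩ := exists_nhds_split_inv hU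
  have hw : Tendsto (fun j => a⁻¹ * v j) atTop (nhds (1 : G)) := by
    have := h1.const_mul a⁻¹
    simpa using this
  have e1 : ∀ᶠ j in atTop, v j ∈ V := h2.eventually_mem hV
  have e2 : ∀ᶠ j in atTop, a⁻¹ * v j ∈ V := hw.eventually_mem hV
  obtain ⟨j, hj1, hj2⟩ := (e1.and e2).exists
  have : v j / (a⁻¹ * v j) ∈ U := hVsplit _ hj1 _ hj2
  have heq : v j / (a⁻¹ * v j) = a := by
    simp [div_eq_mul_inv, mul_inv_rev, mul_assoc]
  rwa [heq] at this

end aux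

lemma nyk_exists_strictMono_comp (f : ℕ → ℕ) (h : (Set.range f).Infinite) :
    ∃ φ : ℕ → ℕ, StrictMono φ ∧ StrictMono (f ∘ φ) := by
  have key : ∀ m c : ℕ, ∃ j, m < j ∧ c < f j := by
    intro m c
    by_contra hcon
    push_neg at hcon
    have hsub : Set.range f ⊆ f '' Set.Iic m ∪ Set.Iic c := by
      rintro x ⟨j, rfl⟩
      rcases le_or_gt j m with hj | hj
      · exact Or.inl ⟨j, hj, rfl⟩
      · exact Or.inr (hcon j hj)
    exact h (((Set.finite_Iic m).image f).union (Set.finite_Iic c) |>.subset hsub)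
  choose F hF1 hF2 using key
  refine ⟨fun i => Nat.rec 0 (fun _ prev => F prev (f prev)) i, ?_, ?_⟩
  · exact strictMono_nat_of_lt_succ fun i => hF1 _ _
  · exact strictMono_nat_of_lt_succ fun i => hF2 _ _

lemma nyk_exists_infinite_fiber (f : ℕ → ℕ) (h : (Set.range f).Finite) :
    ∃ c, {j | f j = c}.Infinite := by
  by_contra hcon
  push_neg at hcon
  have hsub : (Set.univ : Set ℕ) ⊆ ⋃ c ∈ Set.range f, {j | f j = c} := by
    intro j _
    exact Set.mem_biUnion ⟨j, rfl⟩ rfl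
  exact Set.infinite_univ ((h.biUnion fun c _ => hcon c).subset hsub)

lemma nyk_main {G : Type*} [Group G] [TopologicalSpace G] [IsTopologicalGroup G]
    [FrechetUrysohnSpace G]
    (S : ℕ → ℕ → G)
    (hconv : ∀ n, Tendsto (S n) atTop (nhds (1 : G)))
    (hK : ∀ n k, S n k ∉ closure ({1} : Set G)) :
    ∃ u : ℕ → G, Tendsto u atTop (nhds (1 : G)) ∧
      {n : ℕ | (Set.range u ∩ Set.range (S n)).Nonempty}.Infinite := by
  set K := closure ({1} : Set G) with hKdef
  set A : Set G := {x | x ∉ K ∧ ∃ n k, x = S 0 n * S n k} with hAdef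
  -- the bad index set for each n is finite
  have coset_fin : ∀ n : ℕ, {k | S 0 n * S n k ∈ K}.Finite := by
    intro n
    by_contra hinf
    rw [← Set.not_infinite, not_not] at hinf
    set e := Nat.nth (fun k => S 0 n * S n k ∈ K) with he
    have hmem : ∀ i, S 0 n * S n (e i) ∈ K := fun i => Nat.nth_mem_of_infinite hinf i
    have hmono : StrictMono e := Nat.nth_strictMono hinf
    have htend : Tendsto (fun i => S 0 n * S n (e i)) atTop (nhds (S 0 n * 1)) :=
      ((hconv n).comp hmono.tendsto_atTop).const_mul (S 0 n)
    have hcl : S 0 n * 1 ∈ K :=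
      isClosed_closure.mem_of_tendsto htend (Eventually.of_forall hmem)
    exact hK 0 n (by simpa using hcl)
  -- 1 is in the closure of A
  have h1A : (1 : G) ∈ closure A := by
    rw [mem_closure_iff]
    intro W hW h1W
    have : ∀ᶠ n in atTop, S 0 n ∈ W := (hconv 0).eventually_mem (hW.mem_nhds h1W)
    obtain ⟨n, hn⟩ := this.exists
    have htend : Tendsto (fun k => S 0 n * S n k) atTop (nhds (S 0 n * 1)) :=
      (hconv n).const_mul (S 0 n)
    have hWn : ∀ᶠ k in atTop, S 0 n * S n k ∈ W := by
      apply htend.eventually_mem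
      rw [mul_one]
      exact hW.mem_nhds hn
    have hnotK : ∀ᶠ k in atTop, S 0 n * S n k ∉ K := by
      rw [← Nat.cofinite_eq_atTop]
      exact Set.Finite.eventually_cofinite_notMem (coset_fin n)
    obtain ⟨k, hkW, hkK⟩ := (hWn.and hnotK).exists
    exact ⟨S 0 n * S n k, hkW, hkK, n, k, rfl⟩
  obtain ⟨a, hamem, ha⟩ := mem_closure_iff_seq_limit.mp h1A
  choose hnotK nf kf hkey using hamem
  by_cases hr : (Set.range nf).Infinite
  · -- infinitely many n's appear: diagonal sequence works
    obtain ⟨φ, hφ, hfφ⟩ := nyk_exists_strictMono_comp nf hr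
    refine ⟨fun i => S (nf (φ i)) (kf (φ i)), ?_, ?_⟩
    · have hu : (fun i => S (nf (φ i)) (kf (φ i)))
          = fun i => (S 0 (nf (φ i)))⁻¹ * a (φ i) := by
        funext i
        rw [hkey (φ i)]
        group
      rw [hu]
      have h1 : Tendsto (fun i => S 0 (nf (φ i))) atTop (nhds (1 : G)) :=
        (hconv 0).comp hfφ.tendsto_atTop
      have h2 := h1.inv
      have h3 : Tendsto (fun i => a (φ i)) atTop (nhds (1 : G)) :=
        ha.comp hφ.tendsto_atTop
      simpa using h2.mul h3
    · have hsub : Set.range (nf ∘ φ) ⊆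
          {n : ℕ | (Set.range (fun i => S (nf (φ i)) (kf (φ i))) ∩ Set.range (S n)).Nonempty} := by
        rintro x ⟨i, rfl⟩
        exact ⟨S (nf (φ i)) (kf (φ i)), ⟨i, rfl⟩, ⟨kf (φ i), rfl⟩⟩
      exact (Set.infinite_range_of_injective hfφ.injective).mono hsub
  · -- only finitely many n's: derive a contradiction
    exfalso
    rw [Set.not_infinite] at hr
    obtain ⟨n, hJ⟩ := nyk_exists_infinite_fiber nf hr
    set e := Nat.nth (fun j => nf j = n) with he
    have hmem : ∀ i, nf (e i) = n := fun i => Nat.nth_mem_of_infinite hJ i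
    have hmono : StrictMono e := Nat.nth_strictMono hJ
    by_cases hk : (Set.range (fun i => kf (e i))).Infinite
    · obtain ⟨φ, hφ, hkφ⟩ := nyk_exists_strictMono_comp _ hk
      have hv1 : Tendsto (fun i => a (e (φ i))) atTop (nhds (1 : G)) :=
        ha.comp ((hmono.comp hφ).tendsto_atTop)
      have hv2 : Tendsto (fun i => a (e (φ i))) atTop (nhds (S 0 n)) := by
        have heq : (fun i => a (e (φ i))) = fun i => S 0 n * S n (kf (e (φ i))) := by
          funext i
          rw [hkey (e (φ i)), hmem (φ i)]
        rw [heq]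
        have hS : Tendsto (fun i => S n (kf (e (φ i)))) atTop (nhds (1 : G)) :=
          (hconv n).comp hkφ.tendsto_atTop
        simpa using hS.const_mul (S 0 n)
      exact hK 0 n (nyk_two_limits hv2 hv1)
    · rw [Set.not_infinite] at hk
      obtain ⟨k, hk2⟩ := nyk_exists_infinite_fiber _ hk
      set e' := Nat.nth (fun i => kf (e i) = k) with he'
      have hmem' : ∀ i, kf (e (e' i)) = k := fun i => Nat.nth_mem_of_infinite hk2 i
      have hmono' : StrictMono e' := Nat.nth_strictMono hk2
      have hconst : ∀ i, a (e (e' i)) = S 0 n * S n k := by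
        intro i
        rw [hkey (e (e' i)), hmem (e' i), hmem' i]
      have htend : Tendsto (fun _ : ℕ => S 0 n * S n k) atTop (nhds (1 : G)) := by
        have h := ha.comp ((hmono.comp hmono').tendsto_atTop)
        have heq : (a ∘ (e ∘ e')) = fun _ : ℕ => S 0 n * S n k := funext fun i => hconst i
        rwa [heq] at h
      have hcK : S 0 n * S n k ∈ K := by
        apply nyk_mem_K_of_forall
        intro U hU
        exact (htend.eventually_mem hU).exists.choose_spec
      have := hnotK (e (e' 0))
      rw [hconst 0] at this
      exact this hcK

/-- Nyikos: every Fréchet–Urysohn topological group is `α₄` at the identity. -/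
theorem stmt12 {G : Type*} [Group G] [TopologicalSpace G] [IsTopologicalGroup G]
    [FrechetUrysohnSpace G]
    (S : ℕ → ℕ → G) (hinj : ∀ n, Function.Injective (S n))
    (hconv : ∀ n, Tendsto (S n) atTop (nhds (1 : G))) :
    ∃ u : ℕ → G, Tendsto u atTop (nhds (1 : G)) ∧
      {n : ℕ | (Set.range u ∩ Set.range (S n)).Nonempty}.Infinite := by
  set K := closure ({1} : Set G) with hKdef
  by_cases hbig : {n : ℕ | (Set.range (S n) ∩ K).Nonempty}.Infinite
  · -- infinitely many sequences meet the closure of 1: constant-ish sequence works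
    set e := Nat.nth (fun n => (Set.range (S n) ∩ K).Nonempty) with he
    have hmem : ∀ i, (Set.range (S (e i)) ∩ K).Nonempty :=
      fun i => Nat.nth_mem_of_infinite hbig i
    have hmono : StrictMono e := Nat.nth_strictMono hbig
    refine ⟨fun i => (hmem i).choose, ?_, ?_⟩
    · intro U hU
      rw [Filter.mem_map]
      refine Filter.mem_of_superset Filter.univ_mem ?_
      intro i _
      exact nyk_mem_nhds_of_mem_K (hmem i).choose_spec.2 U hU
    · have hsub : Set.range e ⊆
          {n : ℕ | (Set.range (fun i => (hmem i).choose) ∩ Set.range (S n)).Nonempty} := by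
        rintro x ⟨i, rfl⟩
        exact ⟨(hmem i).choose, ⟨i, rfl⟩, (hmem i).choose_spec.1⟩
      exact (Set.infinite_range_of_injective hmono.injective).mono hsub
  · rw [Set.not_infinite] at hbig
    obtain ⟨N, hN⟩ := hbig.bddAbove
    have hK' : ∀ n k, S (n + N + 1) k ∉ K := by
      intro n k hmem
      have : n + N + 1 ∈ {n : ℕ | (Set.range (S n) ∩ K).Nonempty} :=
        ⟨S (n + N + 1) k, ⟨k, rfl⟩, hmem⟩
      have := hN this
      omega
    obtain ⟨u, hu, hinf⟩ := nyk_main (fun n => S (n + N + 1)) (fun n => hconv _) hK'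
    refine ⟨u, hu, ?_⟩
    have hsub : (fun n => n + N + 1) '' {n : ℕ | (Set.range u ∩ Set.range (S (n + N + 1))).Nonempty}
        ⊆ {n : ℕ | (Set.range u ∩ Set.range (S n)).Nonempty} := by
      rintro x ⟨m, hm, rfl⟩
      exact hm
    exact ((hinf.image (Set.injOn_of_injective (fun a b h => by omega))).mono hsub)
end

section
/- Let G be a compact Hausdorff topological group and H a dense subgroup. If U is an open subgroup of H, then the closure of U in G is an open subgroup of G, and its trace on H is U. -/
/-- In a compact Hausdorff group `G` with dense subgroup `H`, the closure of an open
subgroup `U` of `H` is an open subgroup of `G` whose trace on `H` is `U`. -/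
theorem stmt15 {G : Type*} [Group G] [TopologicalSpace G] [IsTopologicalGroup G]
    [CompactSpace G] [T2Space G]
    (H : Subgroup G) (hdense : Dense (H : Set G))
    (U : Subgroup G) (hUH : U ≤ H)
    (hUopen : IsOpen (Subtype.val ⁻¹' (U : Set G) : Set (H : Set G))) :
    (∃ W : Subgroup G, (W : Set G) = closure (U : Set G)) ∧
      IsOpen (closure (U : Set G)) ∧
      closure (U : Set G) ∩ (H : Set G) = (U : Set G) := by
  -- obtain an open set V in G inducing U on H
  obtain ⟨V, hVopen, hVpre⟩ := isOpen_induced_iff.mp hUopen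
  have hVH : V ∩ (H : Set G) = (U : Set G) := by
    ext x
    constructor
    · rintro ⟨hxV, hxH⟩
      have : (⟨x, hxH⟩ : (H : Set G)) ∈ Subtype.val ⁻¹' V := hxV
      rw [hVpre] at this
      exact this
    · intro hxU
      have hxH : x ∈ (H : Set G) := hUH hxU
      have : (⟨x, hxH⟩ : (H : Set G)) ∈ Subtype.val ⁻¹' (U : Set G) := hxU
      rw [← hVpre] at this
      exact ⟨this, hxH⟩
  -- V ⊆ closure U
  have hVsub : V ⊆ closure (U : Set G) := by
    intro x hxV
    rw [mem_closure_iff]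
    intro t ht hxt
    obtain ⟨y, hyH, hyt, hyV⟩ : ∃ y, y ∈ (H : Set G) ∧ y ∈ t ∧ y ∈ V := by
      have := hdense.inter_open_nonempty (t ∩ V) (ht.inter hVopen) ⟨x, hxt, hxV⟩
      obtain ⟨y, ⟨hyt, hyV⟩, hyH⟩ := this
      exact ⟨y, hyH, hyt, hyV⟩
    exact ⟨y, hyt, hVH ▸ ⟨hyV, hyH⟩⟩
  have hopen : IsOpen (closure (U : Set G)) := by
    have h1V : (1 : G) ∈ V := by
      have : (1 : G) ∈ V ∩ (H : Set G) := hVH ▸ U.one_mem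
      exact this.1
    have := U.topologicalClosure.isOpen_of_mem_nhds
      (g := 1) (Filter.mem_of_superset (hVopen.mem_nhds h1V)
        (by exact hVsub))
    exact this
  refine ⟨⟨U.topologicalClosure, rfl⟩, hopen, ?_⟩
  -- trace on H is U: the preimage of U in H is a closed subgroup
  have hclosed : IsClosed (Subtype.val ⁻¹' (U : Set G) : Set (H : Set G)) := by
    have : (Subtype.val ⁻¹' (U : Set G) : Set (H : Set G)) = ((U.subgroupOf H : Subgroup H) : Set H) := by
      ext x; simp [Subgroup.mem_subgroupOf]
    rw [this]
    exact (U.subgroupOf H).isClosed_of_isOpen (by rw [← this]; exact hUopen)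
  apply Set.Subset.antisymm
  · rintro x ⟨hxcl, hxH⟩
    have key : closure (Subtype.val ⁻¹' (U : Set G) : Set (H : Set G)) =
        Subtype.val ⁻¹' closure (Subtype.val '' (Subtype.val ⁻¹' (U : Set G))) :=
      Topology.IsEmbedding.subtypeVal.closure_eq_preimage_closure_image _
    have himg : Subtype.val '' (Subtype.val ⁻¹' (U : Set G) : Set (H : Set G)) = (U : Set G) := by
      rw [Subtype.image_preimage_coe]
      exact Set.inter_eq_right.mpr hUH
    have : (⟨x, hxH⟩ : (H : Set G)) ∈ closure (Subtype.val ⁻¹' (U : Set G) : Set (H : Set G)) := by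
      rw [key, himg]; exact hxcl
    rw [hclosed.closure_eq] at this
    exact this
  · intro x hxU
    exact ⟨subset_closure hxU, hUH hxU⟩
end
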